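/- (Theorem 3, critical point count) Let 0 < r_1 < r_2 < r_3. The perimeter L, viewed as a smooth function on the 2-torus (ℝ/2πℤ)² in the coordinates (α_1, α_2) with α_3 = 0, has exactly six critical points. -/

import Mathlib

open Real

/-- Length of the chordal segment between points at radii `r`, `r'` whose polar angles
differ by `θ`. -/
noncomputable def ell (r r' θ : ℝ) : ℝ :=
  Real.sqrt (r ^ 2 + r' ^ 2 - 2 * r * r' * Real.cos θ)

/-- The perimeter of the connecting cycle for three concentric circles of radii
`r1, r2, r3`, as a function of the polar angles `a1, a2` of the first two vertices,
the third angle being fixed to `0`. -/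
noncomputable def L3 (r1 r2 r3 : ℝ) (a1 a2 : ℝ) : ℝ :=
  ell r1 r2 (a2 - a1) + ell r2 r3 (0 - a2) + ell r3 r1 (a1 - 0)

/-- Partial derivative in the first variable. -/
noncomputable def pd1 (f : ℝ → ℝ → ℝ) (a b : ℝ) : ℝ := deriv (fun x => f x b) a

/-- Partial derivative in the second variable. -/
noncomputable def pd2 (f : ℝ → ℝ → ℝ) (a b : ℝ) : ℝ := deriv (fun y => f a y) b

/-- The Hessian matrix of `L3 r1 r2 r3` at `(a, b)` in the reduced coordinates
`(α₁, α₂)`. -/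
noncomputable def hess3 (r1 r2 r3 a b : ℝ) : Matrix (Fin 2) (Fin 2) ℝ :=
  !![pd1 (pd1 (L3 r1 r2 r3)) a b, pd1 (pd2 (L3 r1 r2 r3)) a b;
     pd2 (pd1 (L3 r1 r2 r3)) a b, pd2 (pd2 (L3 r1 r2 r3)) a b]

namespace Stmt8Aux

noncomputable def G (r r' θ : ℝ) : ℝ := r * r' * Real.sin θ / ell r r' θ

lemma Q_pos {r r' : ℝ} (hr : 0 < r) (hr' : 0 < r') (hne : r ≠ r') (θ : ℝ) :
    0 < r ^ 2 + r' ^ 2 - 2 * r * r' * Real.cos θ := by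
  have h1 : Real.cos θ ≤ 1 := Real.cos_le_one θ
  have h2 : (0:ℝ) < (r - r') ^ 2 := pow_two_pos_of_ne_zero (sub_ne_zero.mpr hne)
  nlinarith [mul_pos hr hr']

lemma ell_pos {r r' : ℝ} (hr : 0 < r) (hr' : 0 < r') (hne : r ≠ r') (θ : ℝ) :
    0 < ell r r' θ := Real.sqrt_pos.mpr (Q_pos hr hr' hne θ)

lemma ell_sq {r r' : ℝ} (hr : 0 < r) (hr' : 0 < r') (hne : r ≠ r') (θ : ℝ) :
    ell r r' θ ^ 2 = r ^ 2 + r' ^ 2 - 2 * r * r' * Real.cos θ :=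
  Real.sq_sqrt (Q_pos hr hr' hne θ).le

lemma ell_neg (r r' θ : ℝ) : ell r r' (-θ) = ell r r' θ := by simp [ell]

lemma G_neg (r r' θ : ℝ) : G r r' (-θ) = -G r r' θ := by
  simp [G, ell_neg, neg_div]

lemma ell_two_pi_sub (r r' θ : ℝ) : ell r r' (2*π - θ) = ell r r' θ := by
  have : Real.cos (2*π - θ) = Real.cos θ := by
    rw [Real.cos_sub]; simp [Real.cos_two_pi, Real.sin_two_pi]
  simp [ell, this]

lemma G_two_pi_sub (r r' θ : ℝ) : G r r' (2*π - θ) = -G r r' θ := by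
  have : Real.sin (2*π - θ) = -Real.sin θ := by
    rw [Real.sin_sub]; simp [Real.cos_two_pi, Real.sin_two_pi]
  simp [G, ell_two_pi_sub, this, neg_div]

lemma G_zero (r r' : ℝ) : G r r' 0 = 0 := by simp [G]

lemma G_pi (r r' : ℝ) : G r r' π = 0 := by simp [G]

lemma hasDerivAt_ell {r r' : ℝ} (hr : 0 < r) (hr' : 0 < r') (hne : r ≠ r') (θ : ℝ) :
    HasDerivAt (fun t => ell r r' t) (G r r' θ) θ := by
  have hc : HasDerivAt (fun t : ℝ => r ^ 2 + r' ^ 2 - 2 * r * r' * Real.cos t)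
      (2 * r * r' * Real.sin θ) θ := by
    have h := ((Real.hasDerivAt_cos θ).const_mul (2 * r * r')).const_sub (r ^ 2 + r' ^ 2)
    refine h.congr_deriv ?_
    ring
  have hQ := (Q_pos hr hr' hne θ).ne'
  have h2 := hc.sqrt hQ
  have hspos := ell_pos hr hr' hne θ
  refine h2.congr_deriv ?_
  simp only [G, ell] at *
  rw [div_eq_div_iff (by positivity) hspos.ne']
  ring

lemma hasDerivAt_L3_fst {r1 r2 r3 : ℝ} (h1 : 0 < r1) (h2 : 0 < r2) (h3 : 0 < r3)
    (h12 : r1 ≠ r2) (h31 : r3 ≠ r1) (a b : ℝ) :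
    HasDerivAt (fun t => L3 r1 r2 r3 t b) (G r3 r1 a - G r1 r2 (b - a)) a := by
  have k1 : HasDerivAt (fun t : ℝ => b - t) (-1) a := by
    simpa using (hasDerivAt_id a).const_sub b
  have k2 : HasDerivAt (fun t : ℝ => t - 0) 1 a := (hasDerivAt_id a).sub_const 0
  have e1 : HasDerivAt (fun t : ℝ => ell r1 r2 (b - t)) (G r1 r2 (b - a) * (-1)) a := by
    have := (hasDerivAt_ell h1 h2 h12 (b - a)).comp a k1
    simpa [Function.comp_def] using this
  have e3 : HasDerivAt (fun t : ℝ => ell r3 r1 (t - 0)) (G r3 r1 (a - 0) * 1) a := by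
    have := (hasDerivAt_ell h3 h1 h31 (a - 0)).comp a k2
    simpa [Function.comp_def] using this
  have := (e1.add_const (ell r2 r3 (0 - b))).add e3
  have heq : (fun t : ℝ => ell r1 r2 (b - t) + ell r2 r3 (0 - b) + ell r3 r1 (t - 0))
      = fun t => L3 r1 r2 r3 t b := by
    funext t; simp [L3]
  simp only [Pi.add_def] at this
  rw [heq] at this
  refine this.congr_deriv ?_
  simp
  ring

lemma hasDerivAt_L3_snd {r1 r2 r3 : ℝ} (h1 : 0 < r1) (h2 : 0 < r2) (h3 : 0 < r3)
    (h12 : r1 ≠ r2) (h23 : r2 ≠ r3) (a b : ℝ) :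
    HasDerivAt (fun t => L3 r1 r2 r3 a t) (G r1 r2 (b - a) + G r2 r3 b) b := by
  have k1 : HasDerivAt (fun t : ℝ => t - a) 1 b := (hasDerivAt_id b).sub_const a
  have k2 : HasDerivAt (fun t : ℝ => 0 - t) (-1) b := by
    simpa using (hasDerivAt_id b).const_sub 0
  have e1 : HasDerivAt (fun t : ℝ => ell r1 r2 (t - a)) (G r1 r2 (b - a) * 1) b := by
    have := (hasDerivAt_ell h1 h2 h12 (b - a)).comp b k1
    simpa [Function.comp_def] using this
  have e2 : HasDerivAt (fun t : ℝ => ell r2 r3 (0 - t)) (G r2 r3 (0 - b) * (-1)) b := by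
    exact (hasDerivAt_ell h2 h3 h23 (0 - b)).comp b k2
  have := (e1.add e2).add_const (ell r3 r1 (a - 0))
  have heq : (fun t : ℝ => ell r1 r2 (t - a) + ell r2 r3 (0 - t) + ell r3 r1 (a - 0))
      = fun t => L3 r1 r2 r3 a t := by
    funext t; simp [L3]
  simp only [Pi.add_def] at this
  rw [heq] at this
  refine this.congr_deriv ?_
  have : G r2 r3 (0 - b) = - G r2 r3 b := by
    rw [show (0:ℝ) - b = -b by ring, G_neg]
  rw [this]
  ring


lemma sin_pos_Ioo {x : ℝ} (hx0 : 0 ≤ x) (hx2 : x < 2*π) (h : 0 < Real.sin x) :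
    0 < x ∧ x < π := by
  have hπ := Real.pi_pos
  constructor
  · rcases eq_or_lt_of_le hx0 with h0 | h0
    · exfalso; rw [← h0] at h; simp at h
    · exact h0
  · by_contra hle
    push_neg at hle
    have h1 : 0 ≤ Real.sin (x - π) := Real.sin_nonneg_of_nonneg_of_le_pi (by linarith) (by linarith)
    have h2 : Real.sin (x - π) = - Real.sin x := by
      rw [Real.sin_sub]; simp
    linarith

lemma sin_neg_Ioo {x : ℝ} (hx0 : 0 ≤ x) (hx2 : x < 2*π) (h : Real.sin x < 0) :
    π < x ∧ x < 2*π := by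
  have hπ := Real.pi_pos
  refine ⟨?_, hx2⟩
  by_contra hle
  push_neg at hle
  have h1 : 0 ≤ Real.sin x := Real.sin_nonneg_of_nonneg_of_le_pi hx0 hle
  linarith

lemma sin_zero_cases {x : ℝ} (hx0 : 0 ≤ x) (hx2 : x < 2*π) (h : Real.sin x = 0) :
    x = 0 ∨ x = π := by
  have hπ := Real.pi_pos
  obtain ⟨n, hn⟩ := Real.sin_eq_zero_iff.mp h
  have hn0 : (0:ℝ) ≤ (n:ℝ) := by nlinarith
  have hn2 : ((n:ℝ)) < 2 := by nlinarith
  have h0 : 0 ≤ n := by exact_mod_cast hn0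
  have h2 : n < 2 := by exact_mod_cast hn2
  interval_cases n
  · left; simpa using hn.symm
  · right; simp at hn; linarith

lemma G_eq_zero_sin {r r' θ : ℝ} (hr : 0 < r) (hr' : 0 < r') (hne : r ≠ r')
    (h : G r r' θ = 0) : Real.sin θ = 0 := by
  have hell := ell_pos hr hr' hne θ
  rw [G, div_eq_zero_iff] at h
  rcases h with h | h
  · have hrr : r * r' ≠ 0 := by positivity
    rcases mul_eq_zero.mp h with h' | h'
    · exact absurd h' hrr
    · exact h'
  · exact absurd h hell.ne'

lemma sin_pos_of_G_pos {r r' θ : ℝ} (hr : 0 < r) (hr' : 0 < r') (hne : r ≠ r')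
    (h : 0 < G r r' θ) : 0 < Real.sin θ := by
  have hell := ell_pos hr hr' hne θ
  rw [G] at h
  rcases div_pos_iff.mp h with ⟨h1, _⟩ | ⟨_, h2⟩
  · nlinarith [mul_pos hr hr']
  · linarith


lemma cos_arcsin_div {r s : ℝ} (hr : 0 < r) (hs : 0 ≤ s) (hsr : s ≤ r) :
    Real.cos (Real.arcsin (s/r)) = Real.sqrt (r^2 - s^2) / r := by
  rw [Real.cos_arcsin]
  rw [show 1 - (s/r)^2 = (r^2 - s^2)/r^2 by field_simp]
  rw [Real.sqrt_div (by nlinarith), Real.sqrt_sq hr.le]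

set_option maxHeartbeats 1600000 in
lemma solve_G {r r' s θ : ℝ} (hr : 0 < r) (hr' : 0 < r') (hne : r ≠ r')
    (hs : 0 < s) (hθ0 : 0 < θ) (hθπ : θ < π) (h : G r r' θ = s) :
    s ≤ r ∧ s ≤ r' ∧ (θ = π - Real.arcsin (s/r) - Real.arcsin (s/r') ∨
      θ = Real.arcsin (s/r) - Real.arcsin (s/r') ∨
      θ = Real.arcsin (s/r') - Real.arcsin (s/r)) := by
  have hπ := Real.pi_pos
  have hell := ell_pos hr hr' hne θ
  have key : r * r' * Real.sin θ = s * ell r r' θ := by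
    rw [G, div_eq_iff hell.ne'] at h
    linarith
  have hQ := ell_sq hr hr' hne θ
  have hsincos := Real.sin_sq_add_cos_sq θ
  have hD : (r * r' * Real.cos θ - s ^ 2) ^ 2 = (r ^ 2 - s ^ 2) * (r' ^ 2 - s ^ 2) := by
    have h2 : (r * r' * Real.sin θ)^2 = (s * ell r r' θ)^2 := by rw [key]
    rw [mul_pow s _, hQ] at h2
    linear_combination (-1) * h2 + (r^2*r'^2) * hsincos
  have hcos1 : Real.cos θ ≤ 1 := Real.cos_le_one θ
  have hrrpos : 0 < r * r' := mul_pos hr hr'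
  -- s ≤ min r r'
  have hss : s ≤ r ∧ s ≤ r' := by
    rcases le_or_gt s r with ha | ha <;> rcases le_or_gt s r' with hb | hb
    · exact ⟨ha, hb⟩
    · exfalso
      have hfac : r'^2 < s^2 := by nlinarith
      have hsq : 0 ≤ (r^2 - s^2) * (r'^2 - s^2) := hD ▸ sq_nonneg _
      have hge : r^2 - s^2 ≤ 0 := by
        by_contra hcon
        push_neg at hcon
        nlinarith [mul_pos hcon (show (0:ℝ) < s^2 - r'^2 by linarith)]
      have heq : r = s := by nlinarith
      have h0 : (r*r'*Real.cos θ - s^2)^2 = 0 := by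
        rw [hD]; rw [show r^2 - s^2 = 0 by nlinarith]; ring
      have hX : r*r'*Real.cos θ - s^2 = 0 := by
        exact sq_eq_zero_iff.mp h0
      nlinarith [hX, mul_pos hr hr', hcos1]
    · exfalso
      have hfac : r^2 < s^2 := by nlinarith
      have hsq : 0 ≤ (r^2 - s^2) * (r'^2 - s^2) := hD ▸ sq_nonneg _
      have hge : r'^2 - s^2 ≤ 0 := by
        by_contra hcon
        push_neg at hcon
        nlinarith [mul_pos (show (0:ℝ) < s^2 - r^2 by linarith) hcon]
      have heq : r' = s := by nlinarith
      have h0 : (r*r'*Real.cos θ - s^2)^2 = 0 := by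
        rw [hD]; rw [show r'^2 - s^2 = 0 by nlinarith]; ring
      have hX : r*r'*Real.cos θ - s^2 = 0 := by
        exact sq_eq_zero_iff.mp h0
      nlinarith [hX, mul_pos hr hr', hcos1]
    · exfalso
      have hrne : (0:ℝ) < (r - r')^2 := pow_two_pos_of_ne_zero (sub_ne_zero.mpr hne)
      have k1 : 0 < s^2 - r*r' := by nlinarith
      have k2 : s^2 - r*r' ≤ s^2 - r*r'*Real.cos θ := by nlinarith [mul_pos hr hr']
      have k3 : (s^2 - r*r')^2 ≤ (s^2 - r*r'*Real.cos θ)^2 := by nlinarith [k1, k2]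
      have kid : (s^2-r*r')^2 - (r^2-s^2)*(r'^2-s^2) = s^2*(r-r')^2 := by ring
      have k4 : (r^2 - s^2)*(r'^2-s^2) < (s^2 - r*r')^2 := by
        nlinarith [mul_pos (pow_pos hs 2) hrne]
      have k5 : (r*r'*Real.cos θ - s^2)^2 = (s^2 - r*r'*Real.cos θ)^2 := by ring
      linarith [hD, k3, k4, k5]
  obtain ⟨hsr, hsr'⟩ := hss
  refine ⟨hsr, hsr', ?_⟩
  set A := Real.sqrt (r^2 - s^2) with hAdef
  set A' := Real.sqrt (r'^2 - s^2) with hA'def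
  have hA2 : A^2 = r^2 - s^2 := Real.sq_sqrt (by nlinarith)
  have hA'2 : A'^2 = r'^2 - s^2 := Real.sq_sqrt (by nlinarith)
  have hA0 : 0 ≤ A := Real.sqrt_nonneg _
  have hA'0 : 0 ≤ A' := Real.sqrt_nonneg _
  set φ := Real.arcsin (s/r) with hφdef
  set φ' := Real.arcsin (s/r') with hφ'def
  have hsinφ : Real.sin φ = s/r :=
    Real.sin_arcsin (le_trans (show (-1:ℝ) ≤ 0 by norm_num) (by positivity)) (by rw [div_le_one hr]; exact hsr)
  have hsinφ' : Real.sin φ' = s/r' :=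
    Real.sin_arcsin (le_trans (show (-1:ℝ) ≤ 0 by norm_num) (by positivity)) (by rw [div_le_one hr']; exact hsr')
  have hcosφ : Real.cos φ = A / r := cos_arcsin_div hr hs.le hsr
  have hcosφ' : Real.cos φ' = A' / r' := cos_arcsin_div hr' hs.le hsr'
  have hφ0 : 0 ≤ φ := Real.arcsin_nonneg.mpr (by positivity)
  have hφ'0 : 0 ≤ φ' := Real.arcsin_nonneg.mpr (by positivity)
  have hφ2 : φ ≤ π/2 := Real.arcsin_le_pi_div_two _
  have hφ'2 : φ' ≤ π/2 := Real.arcsin_le_pi_div_two _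
  -- two branches for cos θ
  have habs : r*r'*Real.cos θ - s^2 = A*A' ∨ r*r'*Real.cos θ - s^2 = -(A*A') := by
    have hAA : (A*A')^2 = (r^2 - s^2) * (r'^2 - s^2) := by
      rw [mul_pow, hA2, hA'2]
    have : (r*r'*Real.cos θ - s^2)^2 = (A*A')^2 := by rw [hD, hAA]
    have habs2 : |r*r'*Real.cos θ - s^2| = |A*A'| := by
      rw [← Real.sqrt_sq_eq_abs, ← Real.sqrt_sq_eq_abs, this]
    exact abs_eq_abs.mp habs2
  rcases habs with hc | hc
  · -- cos θ = (s^2 + A A')/(r r') = cos (φ - φ')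
    have hcosθ : Real.cos θ = (s^2 + A*A')/(r*r') := by
      rw [eq_div_iff hrrpos.ne']; linarith
    have hcoseq : Real.cos θ = Real.cos (φ - φ') := by
      rw [Real.cos_sub, hsinφ, hsinφ', hcosφ, hcosφ', hcosθ]
      field_simp
      ring
    rcases le_total φ' φ with hle | hle
    · right; left
      exact Real.injOn_cos ⟨hθ0.le, hθπ.le⟩ ⟨by linarith, by linarith⟩ hcoseq
    · right; right
      have hcoseq' : Real.cos θ = Real.cos (φ' - φ) := by
        rw [hcoseq, ← Real.cos_neg]; ring_nf
      exact Real.injOn_cos ⟨hθ0.le, hθπ.le⟩ ⟨by linarith, by linarith⟩ hcoseq'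
  · -- cos θ = (s^2 - A A')/(r r') = cos (π - (φ + φ'))
    left
    have hcosθ : Real.cos θ = (s^2 - A*A')/(r*r') := by
      rw [eq_div_iff hrrpos.ne']; linarith
    have hcoseq : Real.cos θ = Real.cos (π - (φ + φ')) := by
      rw [Real.cos_pi_sub, Real.cos_add, hsinφ, hsinφ', hcosφ, hcosφ', hcosθ]
      field_simp
      ring
    have := Real.injOn_cos ⟨hθ0.le, hθπ.le⟩ ⟨by linarith, by linarith⟩ hcoseq
    linarith


set_option maxHeartbeats 1600000 in
lemma G_branch {r r' s : ℝ} (hr : 0 < r) (hr' : 0 < r') (hs : 0 < s)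
    (h1 : s < r) (h2 : s < r') :
    G r r' (π - Real.arcsin (s/r) - Real.arcsin (s/r')) = s := by
  set A := Real.sqrt (r^2 - s^2) with hAdef
  set A' := Real.sqrt (r'^2 - s^2) with hA'def
  have hA2 : A^2 = r^2 - s^2 := Real.sq_sqrt (by nlinarith)
  have hA'2 : A'^2 = r'^2 - s^2 := Real.sq_sqrt (by nlinarith)
  have hA0 : 0 < A := Real.sqrt_pos.mpr (by nlinarith)
  have hA'0 : 0 < A' := Real.sqrt_pos.mpr (by nlinarith)
  set φ := Real.arcsin (s/r) with hφdef
  set φ' := Real.arcsin (s/r') with hφ'def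
  have hsinφ : Real.sin φ = s/r :=
    Real.sin_arcsin (le_trans (show (-1:ℝ) ≤ 0 by norm_num) (by positivity))
      (by rw [div_le_one hr]; exact h1.le)
  have hsinφ' : Real.sin φ' = s/r' :=
    Real.sin_arcsin (le_trans (show (-1:ℝ) ≤ 0 by norm_num) (by positivity))
      (by rw [div_le_one hr']; exact h2.le)
  have hcosφ : Real.cos φ = A / r := cos_arcsin_div hr hs.le h1.le
  have hcosφ' : Real.cos φ' = A' / r' := cos_arcsin_div hr' hs.le h2.le
  have hsin : Real.sin (π - φ - φ') = s*(A+A')/(r*r') := by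
    rw [show π - φ - φ' = π - (φ + φ') by ring, Real.sin_pi_sub, Real.sin_add,
      hsinφ, hsinφ', hcosφ, hcosφ']
    field_simp
    ring
  have hcos : Real.cos (π - φ - φ') = (s^2 - A*A')/(r*r') := by
    rw [show π - φ - φ' = π - (φ + φ') by ring, Real.cos_pi_sub, Real.cos_add,
      hsinφ, hsinφ', hcosφ, hcosφ']
    field_simp
    ring
  have hell : ell r r' (π - φ - φ') = A + A' := by
    rw [ell, hcos]
    have hdiv : 2*r*r'*((s^2 - A*A')/(r*r')) = 2*(s^2 - A*A') := by
      field_simp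
    rw [show r^2 + r'^2 - 2*r*r'*((s^2 - A*A')/(r*r')) = (A+A')^2 by
      rw [hdiv]; linear_combination (-1)*hA2 - hA'2]
    exact Real.sqrt_sq (by positivity)
  rw [G, hsin, hell]
  field_simp

set_option maxHeartbeats 1600000 in
lemma branch_sum {φ1 φ2 φ3 u v w : ℝ} (hπ : 0 < π)
    (h1 : 0 < φ1) (h1' : φ1 ≤ π/2) (h2 : 0 < φ2) (h2' : φ2 ≤ π/2)
    (h3 : 0 < φ3) (h3' : φ3 ≤ π/2)
    (hu : u = π - φ3 - φ1 ∨ u = φ3 - φ1 ∨ u = φ1 - φ3)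
    (hv : v = π - φ2 - φ3 ∨ v = φ2 - φ3 ∨ v = φ3 - φ2)
    (hw : w = π - φ1 - φ2 ∨ w = φ1 - φ2 ∨ w = φ2 - φ1)
    (hsum : u + v + w = 2*π) :
    φ1 + φ2 + φ3 = π/2 ∧ u = π - φ3 - φ1 ∧ v = π - φ2 - φ3 ∧ w = π - φ1 - φ2 := by
  rcases hu with hu | hu | hu <;> rcases hv with hv | hv | hv <;>
    rcases hw with hw | hw | hw <;>
    exact ⟨by linarith, by linarith, by linarith, by linarith⟩

lemma root_spec {r1 r2 r3 : ℝ} (h1 : 0 < r1) (h12 : r1 < r2) (h23 : r2 < r3) :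
    ∃ s, 0 < s ∧ s < r1 ∧
      Real.arcsin (s/r1) + Real.arcsin (s/r2) + Real.arcsin (s/r3) = π/2 ∧
      ∀ t, 0 < t → t ≤ r1 →
        Real.arcsin (t/r1) + Real.arcsin (t/r2) + Real.arcsin (t/r3) = π/2 → t = s := by
  have h2 : 0 < r2 := h1.trans h12
  have h3 : 0 < r3 := h2.trans h23
  have hπ := Real.pi_pos
  set F : ℝ → ℝ := fun s => Real.arcsin (s/r1) + Real.arcsin (s/r2) + Real.arcsin (s/r3)
    with hF
  have hkey : ∀ x y : ℝ, 0 ≤ x → y ≤ r1 → x < y →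
      ∀ r : ℝ, 0 < r → r1 ≤ r → Real.arcsin (x/r) < Real.arcsin (y/r) := by
    intro x y hx hy hxy r hr0 hr1
    apply Real.strictMonoOn_arcsin
    · exact ⟨le_trans (show (-1:ℝ) ≤ 0 by norm_num) (div_nonneg hx hr0.le),
        by rw [div_le_one hr0]; linarith⟩
    · exact ⟨le_trans (show (-1:ℝ) ≤ 0 by norm_num) (div_nonneg (by linarith) hr0.le),
        by rw [div_le_one hr0]; linarith⟩
    · show x / r < y / r
      gcongr
  have hmono : StrictMonoOn F (Set.Icc 0 r1) := by
    intro x hx y hy hxy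
    have k1 := hkey x y hx.1 hy.2 hxy r1 h1 le_rfl
    have k2 := hkey x y hx.1 hy.2 hxy r2 h2 h12.le
    have k3 := hkey x y hx.1 hy.2 hxy r3 h3 (h12.trans h23).le
    simp only [hF]
    linarith
  have hcont : ContinuousOn F (Set.Icc 0 r1) := by
    apply Continuous.continuousOn
    exact ((Real.continuous_arcsin.comp (continuous_id.div_const r1)).add
      (Real.continuous_arcsin.comp (continuous_id.div_const r2))).add
      (Real.continuous_arcsin.comp (continuous_id.div_const r3))
  have h0 : F 0 = 0 := by simp [hF]
  have hr1v : π/2 < F r1 := by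
    have he : F r1 = π/2 + Real.arcsin (r1/r2) + Real.arcsin (r1/r3) := by
      simp only [hF, div_self h1.ne', Real.arcsin_one]
    rw [he]
    have p2 : 0 < Real.arcsin (r1/r2) := Real.arcsin_pos.mpr (by positivity)
    have p3 : 0 < Real.arcsin (r1/r3) := Real.arcsin_pos.mpr (by positivity)
    linarith
  have hmem : π/2 ∈ Set.Ioo (F 0) (F r1) := ⟨by rw [h0]; positivity, hr1v⟩
  obtain ⟨s, hsmem, hFs⟩ := intermediate_value_Ioo h1.le hcont hmem
  refine ⟨s, hsmem.1, hsmem.2, hFs, fun t ht0 ht1 hFt => ?_⟩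
  exact hmono.injOn ⟨ht0.le, ht1⟩ ⟨hsmem.1.le, hsmem.2.le⟩ (hFt.trans hFs.symm)

set_option maxHeartbeats 1600000 in
lemma pos_case {r1 r2 r3 s a b : ℝ} (h1 : 0 < r1) (h12 : r1 < r2) (h23 : r2 < r3)
    (hs0 : 0 < s) (hs1 : s < r1)
    (huniq : ∀ t, 0 < t → t ≤ r1 →
      Real.arcsin (t/r1) + Real.arcsin (t/r2) + Real.arcsin (t/r3) = π/2 → t = s)
    (ha : a ∈ Set.Ico 0 (2*π)) (hb : b ∈ Set.Ico 0 (2*π))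
    (E1 : G r3 r1 a = G r1 r2 (b - a)) (E2 : G r1 r2 (b - a) = - G r2 r3 b)
    (hpos : 0 < G r3 r1 a) :
    a = π - Real.arcsin (s/r3) - Real.arcsin (s/r1) ∧
      b = π + Real.arcsin (s/r2) + Real.arcsin (s/r3) := by
  have h2 : 0 < r2 := h1.trans h12
  have h3 : 0 < r3 := h2.trans h23
  have h13 : r1 < r3 := h12.trans h23
  have hne12 : r1 ≠ r2 := ne_of_lt h12
  have hne23 : r2 ≠ r3 := ne_of_lt h23
  have hne31 : r3 ≠ r1 := (ne_of_lt h13).symm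
  have hπ := Real.pi_pos
  set s0 := G r3 r1 a with hs0def
  -- ranges
  have hsina : 0 < Real.sin a := sin_pos_of_G_pos h3 h1 hne31 hpos
  have haI : 0 < a ∧ a < π := sin_pos_Ioo ha.1 ha.2 hsina
  have hGb : G r2 r3 b = -s0 := by simp only [hs0def]; linarith [E1, E2]
  have hsinb : Real.sin b < 0 := by
    have : 0 < G r2 r3 (2*π - b) := by rw [G_two_pi_sub, hGb]; linarith
    have h' := sin_pos_of_G_pos h2 h3 hne23 this
    have : Real.sin (2*π - b) = -Real.sin b := by
      rw [Real.sin_sub]; simp [Real.sin_two_pi, Real.cos_two_pi]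
    linarith [this ▸ h']
  have hbI : π < b ∧ b < 2*π := sin_neg_Ioo hb.1 hb.2 hsinb
  have hw0 : 0 < b - a := by linarith [haI.2, hbI.1]
  have hw2 : b - a < 2*π := by linarith [haI.1, hbI.2]
  have hGw : G r1 r2 (b - a) = s0 := E1.symm
  have hsinw : 0 < Real.sin (b - a) := sin_pos_of_G_pos h1 h2 hne12 (hGw ▸ hpos)
  have hwI : 0 < b - a ∧ b - a < π := sin_pos_Ioo hw0.le hw2 hsinw
  -- v
  set v := 2*π - b with hvdef
  have hvI : 0 < v ∧ v < π := ⟨by linarith [hbI.2], by linarith [hbI.1]⟩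
  have hGv : G r2 r3 v = s0 := by rw [hvdef, G_two_pi_sub, hGb]; ring
  -- apply solve_G three times
  obtain ⟨hs3, hs1', hu⟩ := solve_G h3 h1 hne31 hpos haI.1 haI.2 rfl
  obtain ⟨hs1'', hs2', hw⟩ := solve_G h1 h2 hne12 hpos hwI.1 hwI.2 hGw
  obtain ⟨hs2'', hs3', hv⟩ := solve_G h2 h3 hne23 hpos hvI.1 hvI.2 hGv
  set φ1 := Real.arcsin (s0/r1) with hφ1
  set φ2 := Real.arcsin (s0/r2) with hφ2
  set φ3 := Real.arcsin (s0/r3) with hφ3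
  have hp1 : 0 < φ1 := Real.arcsin_pos.mpr (by positivity)
  have hp2 : 0 < φ2 := Real.arcsin_pos.mpr (by positivity)
  have hp3 : 0 < φ3 := Real.arcsin_pos.mpr (by positivity)
  have hq1 : φ1 ≤ π/2 := Real.arcsin_le_pi_div_two _
  have hq2 : φ2 ≤ π/2 := Real.arcsin_le_pi_div_two _
  have hq3 : φ3 ≤ π/2 := Real.arcsin_le_pi_div_two _
  have hsum : a + v + (b - a) = 2*π := by rw [hvdef]; ring
  obtain ⟨hsig, hau, hvv, hww⟩ := branch_sum hπ hp1 hq1 hp2 hq2 hp3 hq3 hu hv hw hsum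
  rw [hφ1, hφ2, hφ3] at hsig
  have hs0eq : s0 = s := huniq s0 hpos hs1'' (by linarith)
  rw [hφ3, hφ1, hs0eq] at hau
  rw [hφ2, hφ3, hs0eq] at hvv
  refine ⟨hau, ?_⟩
  have : b = 2*π - v := by rw [hvdef]; ring
  rw [this, hvv]
  ring

end Stmt8Aux

open Stmt8Aux in
set_option maxHeartbeats 3200000 in
/-- Theorem 3, critical point count: for `0 < r1 < r2 < r3` the perimeter,
viewed as a `2π`-periodic function of `(α₁, α₂)` (i.e. as a function on the torus
`(ℝ/2πℤ)²`, represented by the fundamental domain `[0, 2π) × [0, 2π)`), has exactly six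
critical points. -/
theorem stmt_8 (r1 r2 r3 : ℝ) (h1 : 0 < r1) (h12 : r1 < r2) (h23 : r2 < r3) :
    Set.ncard {q : ℝ × ℝ | q.1 ∈ Set.Ico 0 (2 * π) ∧ q.2 ∈ Set.Ico 0 (2 * π) ∧
      deriv (fun t => L3 r1 r2 r3 t q.2) q.1 = 0 ∧
      deriv (fun t => L3 r1 r2 r3 q.1 t) q.2 = 0} = 6 := by
  have h2 : 0 < r2 := h1.trans h12
  have h3 : 0 < r3 := h2.trans h23
  have h13 : r1 < r3 := h12.trans h23
  have hne12 : r1 ≠ r2 := ne_of_lt h12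
  have hne23 : r2 ≠ r3 := ne_of_lt h23
  have hne31 : r3 ≠ r1 := (ne_of_lt h13).symm
  have hπ := Real.pi_pos
  obtain ⟨s, hs0, hs1, hsig, huniq⟩ := root_spec h1 h12 h23
  set φ1 := Real.arcsin (s/r1) with hφ1
  set φ2 := Real.arcsin (s/r2) with hφ2
  set φ3 := Real.arcsin (s/r3) with hφ3
  have hp1 : 0 < φ1 := Real.arcsin_pos.mpr (by positivity)
  have hp2 : 0 < φ2 := Real.arcsin_pos.mpr (by positivity)
  have hp3 : 0 < φ3 := Real.arcsin_pos.mpr (by positivity)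
  have hs2 : s < r2 := by linarith
  have hs3 : s < r3 := by linarith
  have gP1 : G r3 r1 (π - φ3 - φ1) = s := G_branch h3 h1 hs0 hs3 hs1
  have gP2 : G r1 r2 (π - φ1 - φ2) = s := G_branch h1 h2 hs0 hs1 hs2
  have gP3 : G r2 r3 (π - φ2 - φ3) = s := G_branch h2 h3 hs0 hs2 hs3
  set P : ℝ × ℝ := (π - φ3 - φ1, π + φ2 + φ3) with hP
  set Q : ℝ × ℝ := (π + φ3 + φ1, π - φ2 - φ3) with hQ
  have hset : {q : ℝ × ℝ | q.1 ∈ Set.Ico 0 (2 * π) ∧ q.2 ∈ Set.Ico 0 (2 * π) ∧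
      deriv (fun t => L3 r1 r2 r3 t q.2) q.1 = 0 ∧
      deriv (fun t => L3 r1 r2 r3 q.1 t) q.2 = 0}
      = {((0:ℝ),(0:ℝ)), ((0:ℝ),π), (π,(0:ℝ)), ((π:ℝ),π), P, Q} := by
    ext ⟨a, b⟩
    simp only [Set.mem_setOf_eq, Set.mem_insert_iff, Set.mem_singleton_iff]
    rw [(hasDerivAt_L3_fst h1 h2 h3 hne12 hne31 a b).deriv,
        (hasDerivAt_L3_snd h1 h2 h3 hne12 hne23 a b).deriv]
    constructor
    · rintro ⟨ha, hb, hd1, hd2⟩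
      have E1 : G r3 r1 a = G r1 r2 (b - a) := by linarith
      have E2 : G r1 r2 (b - a) = -G r2 r3 b := by linarith
      rcases lt_trichotomy (G r3 r1 a) 0 with hneg | hzero | hpos
      · -- negative case: reflect, end up at Q
        have hpos' : 0 < G r3 r1 (2*π - a) := by rw [G_two_pi_sub]; linarith
        have hsina : Real.sin a < 0 := by
          have hx := sin_pos_of_G_pos h3 h1 hne31 hpos'
          have hy : Real.sin (2*π - a) = -Real.sin a := by
            rw [Real.sin_sub]; simp [Real.sin_two_pi, Real.cos_two_pi]
          linarith [hy ▸ hx]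
        have haI := sin_neg_Ioo ha.1 ha.2 hsina
        have hsinb : 0 < Real.sin b := by
          have hGb : 0 < G r2 r3 b := by linarith [E1, E2]
          exact sin_pos_of_G_pos h2 h3 hne23 hGb
        have hbI := sin_pos_Ioo hb.1 hb.2 hsinb
        have ha' : (2*π - a) ∈ Set.Ico 0 (2*π) := ⟨by linarith [haI.2], by linarith [haI.1]⟩
        have hb' : (2*π - b) ∈ Set.Ico 0 (2*π) := ⟨by linarith [hbI.2], by linarith [hbI.1]⟩
        have E1' : G r3 r1 (2*π - a) = G r1 r2 ((2*π - b) - (2*π - a)) := by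
          rw [G_two_pi_sub, show (2*π - b) - (2*π - a) = -(b - a) by ring, G_neg]
          linarith
        have E2' : G r1 r2 ((2*π - b) - (2*π - a)) = -G r2 r3 (2*π - b) := by
          rw [G_two_pi_sub, show (2*π - b) - (2*π - a) = -(b - a) by ring, G_neg]
          linarith
        obtain ⟨hae, hbe⟩ := pos_case h1 h12 h23 hs0 hs1 huniq ha' hb' E1' E2' hpos'
        have haq : a = π + φ3 + φ1 := by rw [← hφ3, ← hφ1] at hae; linarith
        have hbq : b = π - φ2 - φ3 := by rw [← hφ2, ← hφ3] at hbe; linarith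
        exact Or.inr (Or.inr (Or.inr (Or.inr (Or.inr (by
          rw [hQ, Prod.mk.injEq]; exact ⟨haq, hbq⟩)))))
      · -- zero case: collinear points
        have hsa : Real.sin a = 0 := G_eq_zero_sin h3 h1 hne31 hzero
        have hsb : Real.sin b = 0 := by
          have : G r2 r3 b = 0 := by linarith [E1, E2]
          exact G_eq_zero_sin h2 h3 hne23 this
        rcases sin_zero_cases ha.1 ha.2 hsa with ha0 | ha0 <;>
          rcases sin_zero_cases hb.1 hb.2 hsb with hb0 | hb0
        · exact Or.inl (by rw [Prod.mk.injEq]; exact ⟨ha0, hb0⟩)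
        · exact Or.inr (Or.inl (by rw [Prod.mk.injEq]; exact ⟨ha0, hb0⟩))
        · exact Or.inr (Or.inr (Or.inl (by rw [Prod.mk.injEq]; exact ⟨ha0, hb0⟩)))
        · exact Or.inr (Or.inr (Or.inr (Or.inl (by rw [Prod.mk.injEq]; exact ⟨ha0, hb0⟩))))
      · -- positive case: P
        obtain ⟨hae, hbe⟩ := pos_case h1 h12 h23 hs0 hs1 huniq ha hb E1 E2 hpos
        rw [← hφ3, ← hφ1] at hae
        rw [← hφ2, ← hφ3] at hbe
        exact Or.inr (Or.inr (Or.inr (Or.inr (Or.inl (by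
          rw [hP, Prod.mk.injEq]; exact ⟨hae, hbe⟩)))))
    · intro h
      have h2π : 0 < 2*π := by linarith
      rcases h with h | h | h | h | h | h <;> rw [Prod.mk.injEq] at h <;>
        obtain ⟨ha', hb'⟩ := h <;> subst ha' <;> subst hb'
      · exact ⟨⟨le_rfl, h2π⟩, ⟨le_rfl, h2π⟩, by
          rw [show (0:ℝ) - 0 = 0 by ring, G_zero, G_zero]; ring, by
          rw [show (0:ℝ) - 0 = 0 by ring, G_zero, G_zero]; ring⟩
      · exact ⟨⟨le_rfl, h2π⟩, ⟨hπ.le, by linarith⟩, by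
          rw [show π - 0 = π by ring, G_zero, G_pi]; ring, by
          rw [show π - 0 = π by ring, G_pi, G_pi]; ring⟩
      · refine ⟨⟨hπ.le, by linarith⟩, ⟨le_rfl, h2π⟩, ?_, ?_⟩
        · rw [show (0:ℝ) - π = -π by ring, G_neg, G_pi, G_pi]; ring
        · rw [show (0:ℝ) - π = -π by ring, G_neg, G_pi, G_zero]; ring
      · refine ⟨⟨hπ.le, by linarith⟩, ⟨hπ.le, by linarith⟩, ?_, ?_⟩
        · rw [show π - π = (0:ℝ) by ring, G_zero, G_pi]; ring
        · rw [show π - π = (0:ℝ) by ring, G_zero, G_pi]; ring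
      · -- P
        refine ⟨⟨by linarith, by linarith⟩, ⟨by linarith, by linarith⟩, ?_, ?_⟩
        · rw [show (π + φ2 + φ3) - (π - φ3 - φ1) = π - φ1 - φ2 by linarith]
          rw [gP1, gP2]; ring
        · rw [show (π + φ2 + φ3) - (π - φ3 - φ1) = π - φ1 - φ2 by linarith]
          rw [show π + φ2 + φ3 = 2*π - (π - φ2 - φ3) by ring, G_two_pi_sub]
          rw [gP2, gP3]; ring
      · -- Q
        refine ⟨⟨by linarith, by linarith⟩, ⟨by linarith, by linarith⟩, ?_, ?_⟩
        · rw [show (π - φ2 - φ3) - (π + φ3 + φ1) = -(π - φ1 - φ2) by linarith]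
          rw [show π + φ3 + φ1 = 2*π - (π - φ3 - φ1) by ring, G_two_pi_sub, G_neg]
          rw [gP1, gP2]; ring
        · rw [show (π - φ2 - φ3) - (π + φ3 + φ1) = -(π - φ1 - φ2) by linarith]
          rw [G_neg, gP2, gP3]; ring
  rw [hset]
  -- distinctness
  have c1 : π/2 < π - φ3 - φ1 := by linarith
  have c2 : π - φ3 - φ1 < π := by linarith
  have c3 : π < π + φ2 + φ3 := by linarith
  have c4 : π + φ2 + φ3 < 2*π := by linarith
  have c5 : π < π + φ3 + φ1 := by linarith
  have c6 : π + φ3 + φ1 < 2*π := by linarith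
  have c7 : π/2 < π - φ2 - φ3 := by linarith
  have c8 : π - φ2 - φ3 < π := by linarith
  have hPQ : P ≠ Q := by
    rw [hP, hQ, ne_eq, Prod.mk.injEq, not_and]
    intro hfst
    exact absurd hfst (by linarith)
  have n1 : ((0:ℝ),(0:ℝ)) ∉ ({((0:ℝ),π), (π,(0:ℝ)), ((π:ℝ),π), P, Q} : Set (ℝ × ℝ)) := by
    simp only [Set.mem_insert_iff, Set.mem_singleton_iff, hP, hQ, Prod.mk.injEq, not_or]
    refine ⟨?_, ?_, ?_, ?_, ?_⟩ <;> rintro ⟨hx, hy⟩ <;> linarith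
  have n2 : ((0:ℝ),π) ∉ ({((π:ℝ),(0:ℝ)), ((π:ℝ),π), P, Q} : Set (ℝ × ℝ)) := by
    simp only [Set.mem_insert_iff, Set.mem_singleton_iff, hP, hQ, Prod.mk.injEq, not_or]
    refine ⟨?_, ?_, ?_, ?_⟩ <;> rintro ⟨hx, hy⟩ <;> linarith
  have n3 : ((π:ℝ),(0:ℝ)) ∉ ({((π:ℝ),π), P, Q} : Set (ℝ × ℝ)) := by
    simp only [Set.mem_insert_iff, Set.mem_singleton_iff, hP, hQ, Prod.mk.injEq, not_or]
    refine ⟨?_, ?_, ?_⟩ <;> rintro ⟨hx, hy⟩ <;> linarith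
  have n4 : ((π:ℝ),π) ∉ ({P, Q} : Set (ℝ × ℝ)) := by
    simp only [Set.mem_insert_iff, Set.mem_singleton_iff, hP, hQ, Prod.mk.injEq, not_or]
    refine ⟨?_, ?_⟩ <;> rintro ⟨hx, hy⟩ <;> linarith
  have n5 : P ∉ ({Q} : Set (ℝ × ℝ)) := by
    simp only [Set.mem_singleton_iff]
    exact hPQ
  rw [Set.ncard_insert_of_notMem n1 (Set.toFinite _),
      Set.ncard_insert_of_notMem n2 (Set.toFinite _),
      Set.ncard_insert_of_notMem n3 (Set.toFinite _),
      Set.ncard_insert_of_notMem n4 (Set.toFinite _),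
      Set.ncard_insert_of_notMem n5 (Set.toFinite _),
      Set.ncard_singleton]
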